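/- arXiv:2002.10679 — 4 statements merged into one kernel-verified Lean document; each statement's English description precedes it below -/
import Mathlib

section
/- Let G be a finite simple bipartite graph in which every vertex has even degree, and let s be a vertex of G. Then every maximal trail starting at s is a closed trail of even length. -/
theorem stmt_2 {V : Type*} [Fintype V] (G : SimpleGraph V) [DecidableRel G.Adj]
    (hbip : G.Colorable 2)
    (heven : ∀ x : V, Even (G.degree x))
    (s v : V) (T : G.Walk s v) (hT : T.IsTrail)
    (hmax : ∀ w : V, G.Adj v w → s(v, w) ∈ T.edges) :
    v = s ∧ Even T.length := by
  classical
  -- count of edges of T containing v equals degree of v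
  have hcount : (T.edges.countP fun e => v ∈ e) = G.degree v := by
    rw [List.countP_eq_length_filter]
    have hnodup : (T.edges.filter fun e => v ∈ e).Nodup :=
      hT.edges_nodup.filter _
    have hset : (⟨(T.edges.filter fun e => v ∈ e : List (Sym2 V)), Multiset.coe_nodup.mpr hnodup⟩ :
        Finset (Sym2 V)) = G.incidenceFinset v := by
      apply Finset.ext
      intro e
      simp only [Finset.mem_mk, Multiset.mem_coe, List.mem_filter,
        SimpleGraph.mem_incidenceFinset, decide_eq_true_eq]
      constructor
      · rintro ⟨he, hv⟩
        exact ⟨T.edges_subset_edgeSet he, hv⟩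
      · rintro ⟨he, hv⟩
        refine ⟨?_, hv⟩
        induction e with
        | h a b =>
          rcases Sym2.mem_iff.mp hv with rfl | rfl
          · exact hmax b he
          · rw [Sym2.eq_swap]
            exact hmax a ((SimpleGraph.mem_edgeSet G).mp he).symm
    have := congrArg Finset.card hset
    simpa [SimpleGraph.card_incidenceFinset_eq_degree] using this
  -- hence the count is even, so v = s
  have heq : v = s := by
    have hE : Even (T.edges.countP fun e => v ∈ e) := hcount ▸ heven v
    rw [hT.even_countP_edges_iff v] at hE
    by_contra hne
    exact (hE (fun h => hne h.symm)).2 rfl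
  refine ⟨heq, ?_⟩
  obtain ⟨c⟩ := hbip
  let c' : G.Coloring Bool :=
    SimpleGraph.Coloring.mk (fun x => c x = 0)
      (by intro a b hab h; simp only [decide_eq_decide] at h; exact c.valid hab (by have ha := (c a).isLt; have hb := (c b).isLt; rw [Fin.ext_iff] at h ⊢; omega))
  rw [c'.even_length_iff_congr T]
  subst heq
  tauto
end

section
/- Let m ≥ 1 and let G be the double wheel graph consisting of a cycle v₀v₁⋯v_{4m-1} of length 4m together with two hub vertices x and y each adjacent to all cycle vertices (x and y nonadjacent). Then for the starting vertex s = v₀, the set S = {v₀, v₂, v₄, …, v_{4m-2}} of even-indexed rim vertices is an even kernel of G: it contains v₀, is independent, each odd-indexed rim vertex has exactly 2 neighbors in S, and each of x, y has exactly 2m neighbors in S. -/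
/-- The double wheel graph with rim cycle `v₀ v₁ ⋯ v_{m-1}` of `m` vertices
(`Sum.inl i`) together with two hubs (`Sum.inr 0 = x` and `Sum.inr 1 = y`)
adjacent to every rim vertex, the hubs being nonadjacent. -/
def doubleWheelRim (m : ℕ) : SimpleGraph (Fin m ⊕ Fin 2) :=
  SimpleGraph.fromRel (fun a b =>
    match a, b with
    | Sum.inl i, Sum.inl j => (j : ℕ) = ((i : ℕ) + 1) % m
    | Sum.inl _, Sum.inr _ => True
    | _, _ => False)

lemma dw_adj (n : ℕ) (a b : Fin n ⊕ Fin 2) :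
    (doubleWheelRim n).Adj a b ↔ a ≠ b ∧
      ((match a, b with
        | Sum.inl i, Sum.inl j => (j : ℕ) = ((i : ℕ) + 1) % n
        | Sum.inl _, Sum.inr _ => True
        | _, _ => False) ∨
       (match b, a with
        | Sum.inl i, Sum.inl j => (j : ℕ) = ((i : ℕ) + 1) % n
        | Sum.inl _, Sum.inr _ => True
        | _, _ => False)) := by
  rw [doubleWheelRim, SimpleGraph.fromRel_adj]

lemma dw_adj_inl_inl (n : ℕ) (i j : Fin n) :
    (doubleWheelRim n).Adj (Sum.inl i) (Sum.inl j) ↔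
      i ≠ j ∧ ((j : ℕ) = ((i : ℕ) + 1) % n ∨ (i : ℕ) = ((j : ℕ) + 1) % n) := by
  rw [dw_adj]
  constructor
  · rintro ⟨h1, h2⟩
    exact ⟨fun h => h1 (by rw [h]), h2⟩
  · rintro ⟨h1, h2⟩
    exact ⟨fun h => h1 (Sum.inl.inj h), h2⟩

lemma dw_adj_inr_inl (n : ℕ) (h : Fin 2) (j : Fin n) :
    (doubleWheelRim n).Adj (Sum.inr h) (Sum.inl j) := by
  rw [dw_adj]
  exact ⟨by simp, Or.inr trivial⟩

lemma card_even_fin (m : ℕ) :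
    (Finset.univ.filter (fun j : Fin (4 * m) => (j : ℕ) % 2 = 0)).card = 2 * m := by
  rw [show (2 * m) = (Finset.univ : Finset (Fin (2 * m))).card by simp]
  apply Finset.card_nbij' (i := fun j : Fin (4 * m) => (⟨(j : ℕ) / 2, by
      have := j.isLt; omega⟩ : Fin (2 * m)))
    (j := fun i : Fin (2 * m) => (⟨2 * (i : ℕ), by have := i.isLt; omega⟩ : Fin (4 * m)))
  · intro a _; exact Finset.mem_univ _
  · intro a _
    simp only [Finset.mem_coe, Finset.mem_filter, Finset.mem_univ, true_and, Fin.val_mk]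
    omega
  · intro a ha
    simp only [Finset.mem_coe, Finset.mem_filter, Finset.mem_univ, true_and] at ha
    simp only [Fin.ext_iff, Fin.val_mk]
    omega
  · intro a _
    simp only [Fin.ext_iff, Fin.val_mk]
    omega


lemma succ_mod (n a : ℕ) (ha : a < n) :
    (a + 1) % n = a + 1 ∨ (a + 1 = n ∧ (a + 1) % n = 0) := by
  rcases Nat.lt_or_ge (a + 1) n with h | h
  · exact Or.inl (Nat.mod_eq_of_lt h)
  · have : a + 1 = n := by omega
    exact Or.inr ⟨this, by simp [this]⟩

theorem stmt_9 (m : ℕ) (hm : 1 ≤ m) :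
    let G := doubleWheelRim (4 * m)
    let S : Set (Fin (4 * m) ⊕ Fin 2) := {v | ∃ i : Fin (4 * m), v = Sum.inl i ∧ (i : ℕ) % 2 = 0}
    (Sum.inl (⟨0, by omega⟩ : Fin (4 * m)) : Fin (4 * m) ⊕ Fin 2) ∈ S ∧
    (∀ a ∈ S, ∀ b ∈ S, ¬ G.Adj a b) ∧
    (∀ i : Fin (4 * m), (i : ℕ) % 2 = 1 →
      {w | G.Adj (Sum.inl i) w ∧ w ∈ S}.ncard = 2) ∧
    (∀ h : Fin 2, {w | G.Adj (Sum.inr h) w ∧ w ∈ S}.ncard = 2 * m) := by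
  intro G S
  refine ⟨⟨⟨0, by omega⟩, rfl, by simp⟩, ?_, ?_, ?_⟩
  · rintro a ⟨i, rfl, hi⟩ b ⟨j, rfl, hj⟩ hadj
    rw [dw_adj_inl_inl] at hadj
    obtain ⟨hne, h | h⟩ := hadj <;>
    · have hi4 := i.isLt; have hj4 := j.isLt
      have h1 := succ_mod (4 * m) (i : ℕ) hi4
      have h2 := succ_mod (4 * m) (j : ℕ) hj4
      omega
  · intro i hi
    have hi4 := i.isLt
    have h1lt : ((i : ℕ) + 1) % (4 * m) < 4 * m := Nat.mod_lt _ (by omega)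
    have h2lt : (i : ℕ) - 1 < 4 * m := by omega
    have hmi := succ_mod (4 * m) (i : ℕ) hi4
    have hmi' := succ_mod (4 * m) ((i : ℕ) - 1) h2lt
    have hset : {w | G.Adj (Sum.inl i) w ∧ w ∈ S} =
        {Sum.inl (⟨((i : ℕ) + 1) % (4 * m), h1lt⟩ : Fin (4 * m)),
         Sum.inl (⟨(i : ℕ) - 1, h2lt⟩ : Fin (4 * m))} := by
      ext w
      simp only [Set.mem_setOf_eq, Set.mem_insert_iff, Set.mem_singleton_iff]
      constructor
      · rintro ⟨hadj, k, rfl, hk⟩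
        rw [dw_adj_inl_inl] at hadj
        obtain ⟨hne, h | h⟩ := hadj
        · left
          simp only [Sum.inl.injEq, Fin.ext_iff, Fin.val_mk]
          exact h
        · right
          simp only [Sum.inl.injEq, Fin.ext_iff, Fin.val_mk]
          have hk4 := k.isLt
          have hmk := succ_mod (4 * m) (k : ℕ) hk4
          omega
      · rintro (rfl | rfl)
        · refine ⟨?_, _, rfl, ?_⟩
          · rw [dw_adj_inl_inl]
            refine ⟨?_, Or.inl (by simp)⟩
            simp only [ne_eq, Fin.ext_iff, Fin.val_mk]
            omega
          · simp only [Fin.val_mk]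
            omega
        · refine ⟨?_, _, rfl, ?_⟩
          · rw [dw_adj_inl_inl]
            refine ⟨?_, Or.inr ?_⟩
            · simp only [ne_eq, Fin.ext_iff, Fin.val_mk]
              omega
            · simp only [Fin.val_mk]
              omega
          · simp only [Fin.val_mk]
            omega
    rw [hset, Set.ncard_pair]
    simp only [ne_eq, Sum.inl.injEq, Fin.ext_iff, Fin.val_mk]
    omega
  · intro h
    have hset : {w | G.Adj (Sum.inr h) w ∧ w ∈ S} =
        ↑((Finset.univ.filter (fun j : Fin (4 * m) => (j : ℕ) % 2 = 0)).image
          (Sum.inl : Fin (4 * m) → Fin (4 * m) ⊕ Fin 2)) := by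
      ext w
      simp only [Set.mem_setOf_eq, Finset.coe_image, Set.mem_image, Finset.mem_coe,
        Finset.mem_filter, Finset.mem_univ, true_and]
      constructor
      · rintro ⟨hadj, k, rfl, hk⟩
        exact ⟨k, hk, rfl⟩
      · rintro ⟨k, hk, rfl⟩
        exact ⟨dw_adj_inr_inl _ h k, k, rfl, hk⟩
    rw [hset, Set.ncard_coe_finset, Finset.card_image_of_injective _ Sum.inl_injective,
      card_even_fin]
end

section
/- Let m ≥ 0, let n = 3m + 1, and let Eₙ be the octahedral path (defined by: uᵢ is adjacent to vᵢ, wᵢ, u_{i+1}, w_{i+1}, u_{i-1}, v_{i-1}; vᵢ is adjacent to uᵢ, wᵢ, v_{i+1}, u_{i+1}, v_{i-1}, w_{i-1}; wᵢ is adjacent to uᵢ, vᵢ, w_{i+1}, v_{i+1}, w_{i-1}, u_{i-1}; indices outside [0,n] omitted). Let S = {u_{3i} : 0 ≤ i ≤ m} ∪ {v_{3i+1} : 0 ≤ i ≤ m}. Then S is an independent set, and every vertex not in S has an even number of neighbors in S; specifically, for 0 ≤ i ≤ m the sets N(v_{3i}) ∩ S, N(w_{3i}) ∩ S, N(u_{3i+1})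 ∩ S, N(w_{3i+1}) ∩ S all equal {u_{3i}, v_{3i+1}}, for 0 ≤ i ≤ m−1 the sets N(u_{3i+2}) ∩ S and N(v_{3i+2}) ∩ S equal {v_{3i+1}, u_{3i+3}}, and N(w_{3i+2}) ∩ S = ∅. -/
def octPath (n : ℕ) : SimpleGraph (Fin 3 × Fin (n + 1)) :=
  SimpleGraph.fromRel (fun x y =>
    (x.2 = y.2 ∧ x.1 ≠ y.1) ∨
    ((y.2 : ℕ) = (x.2 : ℕ) + 1 ∧
      ((x.1 = 0 ∧ (y.1 = 0 ∨ y.1 = 2)) ∨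
       (x.1 = 1 ∧ (y.1 = 1 ∨ y.1 = 0)) ∨
       (x.1 = 2 ∧ (y.1 = 2 ∨ y.1 = 1)))))

def pat (a b : Fin 3) : Prop :=
  (a = 0 ∧ (b = 0 ∨ b = 2)) ∨ (a = 1 ∧ (b = 1 ∨ b = 0)) ∨ (a = 2 ∧ (b = 2 ∨ b = 1))

lemma adj_iff {n : ℕ} {a b : Fin 3} {p q : Fin (n+1)} :
    (octPath n).Adj (a, p) (b, q) ↔
      ¬(a = b ∧ p = q) ∧
      (((p : ℕ) = q ∧ a ≠ b) ∨ ((q : ℕ) = (p : ℕ) + 1 ∧ pat a b) ∨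
        ((p : ℕ) = (q : ℕ) + 1 ∧ pat b a)) := by
  simp only [octPath, SimpleGraph.fromRel_adj, ne_eq, Prod.mk.injEq, not_and, pat,
    Fin.ext_iff (a := p)]
  constructor
  · rintro ⟨h1, h2⟩
    refine ⟨h1, ?_⟩
    rcases h2 with (h | h) | (⟨hq, hb⟩ | h)
    · exact Or.inl h
    · exact Or.inr (Or.inl h)
    · exact Or.inl ⟨(congrArg Fin.val hq).symm, fun e => hb e.symm⟩
    · exact Or.inr (Or.inr h)
  · rintro ⟨h1, h2⟩
    refine ⟨h1, ?_⟩
    rcases h2 with h | h | h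
    · exact Or.inl (Or.inl h)
    · exact Or.inl (Or.inr h)
    · exact Or.inr (Or.inr h)

/-- For `n = 3m + 1`, the set `S = {u_{3i} : 0 ≤ i ≤ m} ∪ {v_{3i+1} : 0 ≤ i ≤ m}`
is an even kernel of `Eₙ`, with the stated neighborhood intersections. -/
theorem stmt_13 (m : ℕ) :
    let G := octPath (3 * m + 1)
    let S : Set (Fin 3 × Fin (3 * m + 2)) :=
      {x | (x.1 = 0 ∧ (x.2 : ℕ) % 3 = 0) ∨ (x.1 = 1 ∧ (x.2 : ℕ) % 3 = 1)}
    (∀ a ∈ S, ∀ b ∈ S, ¬ G.Adj a b) ∧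
    (∀ x ∉ S, Even {y | G.Adj x y ∧ y ∈ S}.ncard) ∧
    (∀ (i : ℕ) (hi : i ≤ m),
      ∀ a : Fin 3, a = 1 ∨ a = 2 →
        {y | G.Adj (a, (⟨3 * i, by omega⟩ : Fin (3 * m + 2))) y ∧ y ∈ S} =
          {((0 : Fin 3), (⟨3 * i, by omega⟩ : Fin (3 * m + 2))),
           ((1 : Fin 3), (⟨3 * i + 1, by omega⟩ : Fin (3 * m + 2)))}) ∧
    (∀ (i : ℕ) (hi : i ≤ m),
      ∀ a : Fin 3, a = 0 ∨ a = 2 →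
        {y | G.Adj (a, (⟨3 * i + 1, by omega⟩ : Fin (3 * m + 2))) y ∧ y ∈ S} =
          {((0 : Fin 3), (⟨3 * i, by omega⟩ : Fin (3 * m + 2))),
           ((1 : Fin 3), (⟨3 * i + 1, by omega⟩ : Fin (3 * m + 2)))}) ∧
    (∀ (i : ℕ) (hi : i + 1 ≤ m),
      ∀ a : Fin 3, a = 0 ∨ a = 1 →
        {y | G.Adj (a, (⟨3 * i + 2, by omega⟩ : Fin (3 * m + 2))) y ∧ y ∈ S} =
          {((1 : Fin 3), (⟨3 * i + 1, by omega⟩ : Fin (3 * m + 2))),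
           ((0 : Fin 3), (⟨3 * i + 3, by omega⟩ : Fin (3 * m + 2)))}) ∧
    (∀ (i : ℕ) (hi : i + 1 ≤ m),
      {y | G.Adj ((2 : Fin 3), (⟨3 * i + 2, by omega⟩ : Fin (3 * m + 2))) y ∧ y ∈ S} = ∅) := by
  intro G S
  have h3 : ∀ (i : ℕ) (hi : i ≤ m),
      ∀ a : Fin 3, a = 1 ∨ a = 2 →
        {y | G.Adj (a, (⟨3 * i, by omega⟩ : Fin (3 * m + 2))) y ∧ y ∈ S} =
          {((0 : Fin 3), (⟨3 * i, by omega⟩ : Fin (3 * m + 2))),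
           ((1 : Fin 3), (⟨3 * i + 1, by omega⟩ : Fin (3 * m + 2)))} := by
    rintro i hi a (rfl | rfl) <;>
    · ext ⟨b, j⟩
      have hj := j.isLt
      simp only [G, S, Set.mem_setOf_eq, adj_iff, Set.mem_insert_iff, Set.mem_singleton_iff,
        Prod.mk.injEq, Fin.ext_iff, pat]
      fin_cases b <;> simp <;> omega
  have h4 : ∀ (i : ℕ) (hi : i ≤ m),
      ∀ a : Fin 3, a = 0 ∨ a = 2 →
        {y | G.Adj (a, (⟨3 * i + 1, by omega⟩ : Fin (3 * m + 2))) y ∧ y ∈ S} =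
          {((0 : Fin 3), (⟨3 * i, by omega⟩ : Fin (3 * m + 2))),
           ((1 : Fin 3), (⟨3 * i + 1, by omega⟩ : Fin (3 * m + 2)))} := by
    rintro i hi a (rfl | rfl) <;>
    · ext ⟨b, j⟩
      have hj := j.isLt
      simp only [G, S, Set.mem_setOf_eq, adj_iff, Set.mem_insert_iff, Set.mem_singleton_iff,
        Prod.mk.injEq, Fin.ext_iff, pat]
      fin_cases b <;> simp <;> omega
  have h5 : ∀ (i : ℕ) (hi : i + 1 ≤ m),
      ∀ a : Fin 3, a = 0 ∨ a = 1 →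
        {y | G.Adj (a, (⟨3 * i + 2, by omega⟩ : Fin (3 * m + 2))) y ∧ y ∈ S} =
          {((1 : Fin 3), (⟨3 * i + 1, by omega⟩ : Fin (3 * m + 2))),
           ((0 : Fin 3), (⟨3 * i + 3, by omega⟩ : Fin (3 * m + 2)))} := by
    rintro i hi a (rfl | rfl) <;>
    · ext ⟨b, j⟩
      have hj := j.isLt
      simp only [G, S, Set.mem_setOf_eq, adj_iff, Set.mem_insert_iff, Set.mem_singleton_iff,
        Prod.mk.injEq, Fin.ext_iff, pat]
      fin_cases b <;> simp <;> omega
  have h6 : ∀ (i : ℕ) (hi : i + 1 ≤ m),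
      {y | G.Adj ((2 : Fin 3), (⟨3 * i + 2, by omega⟩ : Fin (3 * m + 2))) y ∧ y ∈ S} = ∅ := by
    intro i hi
    ext ⟨b, j⟩
    have hj := j.isLt
    simp only [G, S, Set.mem_setOf_eq, adj_iff, Set.mem_empty_iff_false, iff_false,
      Prod.mk.injEq, Fin.ext_iff, pat]
    fin_cases b <;> simp <;> omega
  have h1 : ∀ a ∈ S, ∀ b ∈ S, ¬ G.Adj a b := by
    rintro ⟨a, p⟩ ha ⟨b, q⟩ hb hadj
    have hp := p.isLt
    have hq := q.isLt
    simp only [S, Set.mem_setOf_eq] at ha hb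
    simp only [G, adj_iff, pat, Prod.mk.injEq, Fin.ext_iff, ne_eq] at hadj
    have e0 : ((0:Fin 3):ℕ) = 0 := rfl
    have e1 : ((1:Fin 3):ℕ) = 1 := rfl
    have e2 : ((2:Fin 3):ℕ) = 2 := rfl
    rcases ha with ⟨rfl, hp3⟩ | ⟨rfl, hp3⟩ <;> rcases hb with ⟨rfl, hq3⟩ | ⟨rfl, hq3⟩ <;>
      simp [e0, e1, e2] at hadj <;> omega
  have h2 : ∀ x ∉ S, Even {y | G.Adj x y ∧ y ∈ S}.ncard := by
    rintro ⟨a, j⟩ hx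
    have hj := j.isLt
    simp only [S, Set.mem_setOf_eq, not_or, not_and] at hx
    have hmod : (j:ℕ) % 3 = 0 ∨ (j:ℕ) % 3 = 1 ∨ (j:ℕ) % 3 = 2 := by omega
    have hne : ∀ (p q : Fin (3*m+2)), ((0:Fin 3), p) ≠ ((1:Fin 3), q) := by
      intro p q hcon
      have : ((0:Fin 3):ℕ) = ((1:Fin 3):ℕ) := congrArg (fun z => (z.1:ℕ)) hcon
      simp at this
    rcases hmod with h0 | h1' | h2'
    · obtain ⟨i, hi⟩ : ∃ i, (j:ℕ) = 3 * i := ⟨(j:ℕ)/3, by omega⟩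
      have him : i ≤ m := by omega
      have hjeq : j = (⟨3 * i, by omega⟩ : Fin (3*m+2)) := Fin.ext hi
      have ha12 : a = 1 ∨ a = 2 := by
        fin_cases a
        · exact absurd h0 (hx.1 rfl)
        · exact Or.inl rfl
        · exact Or.inr rfl
      rw [hjeq, h3 i him a ha12, Set.ncard_pair (hne _ _)]
      exact even_two
    · obtain ⟨i, hi⟩ : ∃ i, (j:ℕ) = 3 * i + 1 := ⟨(j:ℕ)/3, by omega⟩
      have him : i ≤ m := by omega
      have hjeq : j = (⟨3 * i + 1, by omega⟩ : Fin (3*m+2)) := Fin.ext hi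
      have ha02 : a = 0 ∨ a = 2 := by
        fin_cases a
        · exact Or.inl rfl
        · exact absurd h1' (hx.2 rfl)
        · exact Or.inr rfl
      rw [hjeq, h4 i him a ha02, Set.ncard_pair (hne _ _)]
      exact even_two
    · obtain ⟨i, hi⟩ : ∃ i, (j:ℕ) = 3 * i + 2 := ⟨(j:ℕ)/3, by omega⟩
      have him : i + 1 ≤ m := by omega
      have hjeq : j = (⟨3 * i + 2, by omega⟩ : Fin (3*m+2)) := Fin.ext hi
      have ha3 : a = 0 ∨ a = 1 ∨ a = 2 := by
        rcases a with ⟨av, hav⟩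
        interval_cases av <;> simp [Fin.ext_iff]
      rcases ha3 with rfl | rfl | rfl
      · rw [hjeq, h5 i him 0 (Or.inl rfl),
          Set.ncard_pair (fun hcc => hne _ _ hcc.symm)]
        exact even_two
      · rw [hjeq, h5 i him 1 (Or.inr rfl),
          Set.ncard_pair (fun hcc => hne _ _ hcc.symm)]
        exact even_two
      · rw [hjeq, h6 i him, Set.ncard_empty]
        exact Even.zero
  exact ⟨h1, h2, h3, h4, h5, h6⟩
end

section
/- Let G be a finite simple graph with starting vertex s, and let S be an even kernel of G (s ∈ S, S independent, every vertex outside S has an even number of neighbors in S). Let T be a trail starting at s whose vertices alternate between S and the complement of S (each edge of T has one endpoint in S and one outside S). If T has odd length, ending at a vertex v ∉ S, then there exists a neighbor of v in S joined to v by an edge not used by T. -/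
theorem stmt_14 {V : Type*} [Fintype V] (G : SimpleGraph V)
    (s : V) (S : Set V)
    (hsS : s ∈ S)
    (hind : ∀ a ∈ S, ∀ b ∈ S, ¬ G.Adj a b)
    (hker : ∀ x : V, x ∉ S → Even {w | G.Adj x w ∧ w ∈ S}.ncard)
    (v : V) (T : G.Walk s v) (hT : T.IsTrail)
    (halt : ∀ a b : V, s(a, b) ∈ T.edges → (a ∈ S ↔ b ∉ S))
    (hodd : Odd T.length) (hv : v ∉ S) :
    ∃ w ∈ S, G.Adj v w ∧ s(v, w) ∉ T.edges := by
  classical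
  by_contra hcon
  push_neg at hcon
  -- hcon : ∀ w ∈ S, G.Adj v w → s(v, w) ∈ T.edges
  have hsv : s ≠ v := fun h => hv (h ▸ hsS)
  -- the count of edges of T containing v is odd
  have hOddCount : ¬ Even (T.edges.countP fun e => v ∈ e) := by
    rw [hT.even_countP_edges_iff v]
    intro h
    exact absurd rfl (h hsv).2
  -- the neighbours of v in S, as a finset
  set F : Finset V := {w | G.Adj v w ∧ w ∈ S}.toFinset with hF
  have hEvenF : Even F.card := by
    have := hker v hv
    rwa [Set.ncard_eq_toFinset_card'] at this
  -- the filtered edges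
  have hcard : F.card = (T.edges.filter fun e => v ∈ e).length := by
    have hnodup : (T.edges.filter fun e => v ∈ e).Nodup :=
      hT.edges_nodup.filter _
    rw [← List.toFinset_card_of_nodup hnodup]
    apply Finset.card_bij (fun w _ => s(v, w))
    · intro w hw
      rw [hF, Set.mem_toFinset] at hw
      simp only [List.mem_toFinset, List.mem_filter, decide_eq_true_eq]
      exact ⟨hcon w hw.2 hw.1, Sym2.mem_mk_left v w⟩
    · intro a ha b hb hab
      rw [hF, Set.mem_toFinset] at ha hb
      rcases Sym2.eq_iff.mp hab with ⟨_, h⟩ | ⟨h1, h2⟩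
      · exact h
      · exact absurd (h1 ▸ hb.1) (G.irrefl)
    · intro e he
      simp only [List.mem_toFinset, List.mem_filter, decide_eq_true_eq] at he
      obtain ⟨he1, he2⟩ := he
      obtain ⟨w, rfl⟩ := Sym2.mem_iff_exists.mp he2
      have hadj : G.Adj v w := T.adj_of_mem_edges he1
      have hwS : w ∈ S := by
        by_contra hwS
        exact hv ((halt v w he1).mpr hwS)
      exact ⟨w, by rw [hF, Set.mem_toFinset]; exact ⟨hadj, hwS⟩, rfl⟩
  rw [hcard, ← List.countP_eq_length_filter] at hEvenF
  exact hOddCount hEvenF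
end
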